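/- For all y ∈ [0,1] and θ ∈ [0,1], one has θ·sin(θy)/y + 2·cos(θy) − 2·cosh(θ√(1−y²)) ≤ 0 (interpreting sin(θy)/y as θ when y = 0). Equivalently, θ·sin(θy) ≤ y·(2cosh(θ√(1−y²)) − 2cos(θy)) for y ∈ (0,1]. -/

import Mathlib

lemma cosh_lower_bound (t : ℝ) : 1 + t ^ 2 / 2 ≤ Real.cosh t := by
  rw [← Real.cosh_abs]
  have h0 : (0:ℝ) ≤ |t| := abs_nonneg t
  have hs : |t| / 2 ≤ Real.sinh (|t| / 2) := by
    rcases eq_or_lt_of_le h0 with h | h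
    · simp [← h]
    · exact le_of_lt (Real.self_lt_sinh_iff.mpr (by linarith))
  have h2 : Real.cosh |t| = Real.cosh (|t| / 2) ^ 2 + Real.sinh (|t| / 2) ^ 2 := by
    rw [← Real.cosh_two_mul]; ring_nf
  have h3 : Real.cosh (|t| / 2) ^ 2 = Real.sinh (|t| / 2) ^ 2 + 1 := by
    rw [Real.cosh_sq]
  have habs : |t| ^ 2 = t ^ 2 := sq_abs t
  nlinarith [sq_nonneg (|t|/2)]

lemma key_ineq (y θ : ℝ) (hy : y ∈ Set.Icc (0 : ℝ) 1) (hθ : θ ∈ Set.Icc (0 : ℝ) 1) :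
    θ * Real.sin (θ * y) ≤
      y * (2 * Real.cosh (θ * Real.sqrt (1 - y ^ 2)) - 2 * Real.cos (θ * y)) := by
  obtain ⟨hy0, hy1⟩ := hy
  obtain ⟨hθ0, hθ1⟩ := hθ
  set s := Real.sqrt (1 - y ^ 2) with hs
  have hs0 : 0 ≤ s := Real.sqrt_nonneg _
  have hs2 : s ^ 2 = 1 - y ^ 2 := Real.sq_sqrt (by nlinarith)
  have hx0 : 0 ≤ θ * y := mul_nonneg hθ0 hy0
  have hxle : θ * y ≤ 1 := mul_le_one₀ hθ1 hy0 hy1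
  have hx1 : |θ * y| ≤ 1 := by rw [abs_of_nonneg hx0]; exact hxle
  have hsin := abs_le.mp (Real.sin_bound hx1)
  have hcos := abs_le.mp (Real.cos_bound hx1)
  rw [abs_of_nonneg hx0] at hsin hcos
  have hcosh := cosh_lower_bound (θ * s)
  have hS : Real.sin (θ * y) ≤ θ * y - (θ * y) ^ 3 / 6 + (θ * y) ^ 4 * (5 / 96) := by
    nlinarith [hsin.2, mul_nonneg (pow_nonneg hx0 4) (sub_nonneg.mpr hxle)]
  have hC : Real.cos (θ * y) ≤ 1 - (θ * y) ^ 2 / 2 + (θ * y) ^ 4 * (5 / 96) := by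
    linarith [hcos.2]
  have hL : θ * Real.sin (θ * y) ≤
      θ * (θ * y - (θ * y) ^ 3 / 6 + (θ * y) ^ 4 * (5 / 96)) :=
    mul_le_mul_of_nonneg_left hS hθ0
  have hsub : (θ * s) ^ 2 = θ ^ 2 * (1 - y ^ 2) := by rw [mul_pow, hs2]
  have hR : y * (2 * (1 + θ ^ 2 * (1 - y ^ 2) / 2) -
        2 * (1 - (θ * y) ^ 2 / 2 + (θ * y) ^ 4 * (5 / 96))) ≤
      y * (2 * Real.cosh (θ * s) - 2 * Real.cos (θ * y)) :=
    mul_le_mul_of_nonneg_left (by nlinarith [hcosh, hsub]) hy0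
  have hA : 0 ≤ θ ^ 4 * y ^ 3 :=
    mul_nonneg (pow_nonneg hθ0 4) (pow_nonneg hy0 3)
  have hy2 : y ^ 2 ≤ 1 := by nlinarith
  have hp1 : 0 ≤ θ ^ 4 * y ^ 3 * (1 - θ * y) := mul_nonneg hA (by linarith)
  have hp2 : 0 ≤ θ ^ 4 * y ^ 3 * (1 - y ^ 2) := mul_nonneg hA (by linarith)
  have hmid : θ * (θ * y - (θ * y) ^ 3 / 6 + (θ * y) ^ 4 * (5 / 96)) ≤
      y * (2 * (1 + θ ^ 2 * (1 - y ^ 2) / 2) -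
        2 * (1 - (θ * y) ^ 2 / 2 + (θ * y) ^ 4 * (5 / 96))) := by nlinarith [hp1, hp2, hA]
  linarith

/-- For all `y ∈ [0,1]` and `θ ∈ [0,1]`,
`θ·sin(θy)/y + 2cos(θy) − 2cosh(θ√(1−y²)) ≤ 0` (interpreting `sin(θy)/y` as `θ` when
`y = 0`).  Equivalently, `θ·sin(θy) ≤ y·(2cosh(θ√(1−y²)) − 2cos(θy))` for `y ∈ (0,1]`. -/
theorem density_comparison_ineq (y θ : ℝ) (hy : y ∈ Set.Icc (0 : ℝ) 1)
    (hθ : θ ∈ Set.Icc (0 : ℝ) 1) :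
    θ * (if y = 0 then θ else Real.sin (θ * y) / y) + 2 * Real.cos (θ * y) -
        2 * Real.cosh (θ * Real.sqrt (1 - y ^ 2)) ≤ 0 ∧
      (0 < y →
        θ * Real.sin (θ * y) ≤
          y * (2 * Real.cosh (θ * Real.sqrt (1 - y ^ 2)) - 2 * Real.cos (θ * y))) := by
  have hkey := key_ineq y θ hy hθ
  refine ⟨?_, fun _ => hkey⟩
  by_cases h0 : y = 0
  · subst h0
    have h1 : Real.sqrt (1 - (0:ℝ) ^ 2) = 1 := by norm_num
    rw [h1]
    simp only [if_pos rfl, mul_zero, Real.cos_zero, mul_one, if_true]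
    have := cosh_lower_bound θ
    nlinarith
  · rw [if_neg h0]
    have hy0 : 0 < y := lt_of_le_of_ne hy.1 (Ne.symm h0)
    have h2 : θ * (Real.sin (θ * y) / y) ≤
        2 * Real.cosh (θ * Real.sqrt (1 - y ^ 2)) - 2 * Real.cos (θ * y) := by
      rw [← mul_div_assoc, div_le_iff₀ hy0]
      nlinarith [hkey]
    linarith
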